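/- arXiv:2302.12093 — 6 statements merged into one kernel-verified Lean document; each statement's English description precedes it below -/
import Mathlib

section
/- The relative derivative of the idle probability satisfies: −π_0'(p)/π_0(p) = Σ_{k=0}^{K−1} (λ_k'(p)/λ_k(p)) · S_{k+1}(p), where S_j(p) = Σ_{i=j}^K π_i(p). -/
/-- Triangular sum swap. -/
lemma tri_sum (n : ℕ) (g : ℕ → ℕ → ℝ) :
    ∑ k ∈ Finset.range (n + 1), ∑ i ∈ Finset.range k, g i k
      = ∑ i ∈ Finset.range n, ∑ k ∈ Finset.Icc (i + 1) n, g i k := by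
  induction n with
  | zero => simp
  | succ n ih =>
      have hRHS : ∑ i ∈ Finset.range (n + 1), ∑ k ∈ Finset.Icc (i + 1) (n + 1), g i k
          = ∑ i ∈ Finset.range n, ∑ k ∈ Finset.Icc (i + 1) n, g i k
            + ∑ i ∈ Finset.range (n + 1), g i (n + 1) := by
        rw [Finset.sum_range_succ]
        have h1 : ∀ i ∈ Finset.range n,
            ∑ k ∈ Finset.Icc (i + 1) (n + 1), g i k
              = ∑ k ∈ Finset.Icc (i + 1) n, g i k + g i (n + 1) := by
          intro i hi
          rw [Finset.mem_range] at hi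
          exact Finset.sum_Icc_succ_top (by omega) _
        rw [Finset.sum_congr rfl h1, Finset.sum_add_distrib,
          Finset.Icc_self, Finset.sum_singleton, Finset.sum_range_succ]
        ring
      rw [Finset.sum_range_succ, ih, hRHS]

/-- The relative derivative of the idle probability satisfies
`−π₀'(p)/π₀(p) = Σ_{k=0}^{K−1} (λ_k'(p)/λ_k(p)) · S_{k+1}(p)`,
where `S_j(p) = Σ_{i=j}^K π_i(p)`. -/
theorem idle_probability_relative_derivative
    (K : ℕ) (hK : 1 ≤ K) (μ : ℝ) (hμ : 0 < μ)
    (lam pr : ℕ → ℝ → ℝ) (p : ℝ)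
    (hlamK : ∀ q, lam K q = 0)
    (hlampos : ∀ q, ∀ k < K, 0 < lam k q)
    (hprpos : ∀ q, ∀ k ≤ K, 0 < pr k q)
    (hsum : ∀ q, ∑ k ∈ Finset.range (K + 1), pr k q = 1)
    (hdb : ∀ q, ∀ k < K, lam k q * pr k q = μ * pr (k + 1) q)
    (hdiffLam : ∀ k ≤ K, DifferentiableAt ℝ (lam k) p)
    (hdiffPr : ∀ k ≤ K, DifferentiableAt ℝ (pr k) p) :
    -(deriv (pr 0) p) / pr 0 p
      = ∑ k ∈ Finset.range K,
          deriv (lam k) p / lam k p * ∑ i ∈ Finset.Icc (k + 1) K, pr i p := by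
  have hμ' : μ ≠ 0 := ne_of_gt hμ
  -- log-derivative recursion
  have hrec : ∀ k < K, deriv (pr (k + 1)) p / pr (k + 1) p
      = deriv (lam k) p / lam k p + deriv (pr k) p / pr k p := by
    intro k hk
    have heq : pr (k + 1) = fun q => lam k q * pr k q / μ := by
      funext q
      have := hdb q k hk
      field_simp
      linarith
    have hlne : lam k p ≠ 0 := ne_of_gt (hlampos p k hk)
    have hpne : pr k p ≠ 0 := ne_of_gt (hprpos p k (le_of_lt hk))
    rw [heq]
    have hd : deriv (fun q => lam k q * pr k q / μ) p
        = (deriv (lam k) p * pr k p + lam k p * deriv (pr k) p) / μ := by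
      rw [deriv_div_const, deriv_fun_mul (hdiffLam k (le_of_lt hk)) (hdiffPr k (le_of_lt hk))]
    rw [hd]
    field_simp
  -- closed form of log derivative
  have hr : ∀ k ≤ K, deriv (pr k) p / pr k p
      = deriv (pr 0) p / pr 0 p + ∑ i ∈ Finset.range k, deriv (lam i) p / lam i p := by
    intro k hk
    induction k with
    | zero => simp
    | succ k ih =>
        rw [hrec k (by omega), ih (by omega), Finset.sum_range_succ]
        ring
  -- derivative of normalization is zero
  have hz : ∑ k ∈ Finset.range (K + 1), deriv (pr k) p = 0 := by
    have h1 : deriv (fun q => ∑ k ∈ Finset.range (K + 1), pr k q) p = 0 := by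
      have : (fun q => ∑ k ∈ Finset.range (K + 1), pr k q) = fun _ => (1 : ℝ) :=
        funext hsum
      rw [this]; simp
    rw [deriv_fun_sum (fun k hk => hdiffPr k (by
      simp only [Finset.mem_range] at hk; omega))] at h1
    exact h1
  -- express each deriv (pr k) p
  have hexpr : ∀ k ∈ Finset.range (K + 1), deriv (pr k) p
      = (deriv (pr 0) p / pr 0 p + ∑ i ∈ Finset.range k, deriv (lam i) p / lam i p)
          * pr k p := by
    intro k hk
    simp only [Finset.mem_range] at hk
    have hpne : pr k p ≠ 0 := ne_of_gt (hprpos p k (by omega))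
    have := hr k (by omega)
    field_simp at this
    linarith [this]
  rw [Finset.sum_congr rfl hexpr] at hz
  simp only [add_mul, Finset.sum_add_distrib, ← Finset.mul_sum, hsum p, mul_one,
    Finset.sum_mul] at hz
  have htri := tri_sum K (fun i k => deriv (lam i) p / lam i p * pr k p)
  rw [htri] at hz
  have hfinal : ∀ i ∈ Finset.range K,
      ∑ k ∈ Finset.Icc (i + 1) K, deriv (lam i) p / lam i p * pr k p
        = deriv (lam i) p / lam i p * ∑ k ∈ Finset.Icc (i + 1) K, pr k p := by
    intro i _
    rw [Finset.mul_sum]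
  rw [Finset.sum_congr rfl hfinal] at hz
  rw [neg_div]
  linarith
end

section
/- The policy gradient admits the weighted direct effect expression: V'(p) = μ π_0(p) Σ_{k=0}^{K−1} (λ_k'(p)/λ_k(p)) Σ_{i=k+1}^K π_i(p), where V(q) = Σ_{k=0}^K π_k(q) λ_k(q). -/
open Finset in
private lemma mySwap (n : ℕ) (f g : ℕ → ℝ) :
    ∑ i ∈ range n, (f i * ∑ k ∈ range i, g k)
      = ∑ k ∈ range n, g k * ∑ i ∈ Ico (k + 1) n, f i := by
  induction n with
  | zero => simp
  | succ n ih =>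
    rw [Finset.sum_range_succ, ih, Finset.sum_range_succ]
    have h1 : ∀ k ∈ range n, g k * ∑ i ∈ Ico (k + 1) (n + 1), f i
        = g k * ∑ i ∈ Ico (k + 1) n, f i + g k * f n := by
      intro k hk
      rw [Finset.sum_Ico_succ_top (Nat.succ_le_of_lt (Finset.mem_range.mp hk))]
      ring
    rw [Finset.sum_congr rfl h1, Finset.sum_add_distrib, Finset.Ico_self, Finset.sum_empty,
      mul_zero, add_zero, ← Finset.sum_mul]
    ring

/-- The policy gradient admits the weighted direct effect expression:
`V'(p) = μ π₀(p) Σ_{k=0}^{K−1} (λ_k'(p)/λ_k(p)) Σ_{i=k+1}^K π_i(p)`,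
where `V(q) = Σ_{k=0}^K π_k(q) λ_k(q)`. -/
theorem weighted_direct_effect_expression
    (K : ℕ) (hK : 1 ≤ K) (μ : ℝ) (hμ : 0 < μ)
    (lam pr : ℕ → ℝ → ℝ) (p : ℝ)
    (hlamK : ∀ q, lam K q = 0)
    (hlampos : ∀ q, ∀ k < K, 0 < lam k q)
    (hprpos : ∀ q, ∀ k ≤ K, 0 < pr k q)
    (hsum : ∀ q, ∑ k ∈ Finset.range (K + 1), pr k q = 1)
    (hdb : ∀ q, ∀ k < K, lam k q * pr k q = μ * pr (k + 1) q)
    (hdiffLam : ∀ k ≤ K, DifferentiableAt ℝ (lam k) p)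
    (hdiffPr : ∀ k ≤ K, DifferentiableAt ℝ (pr k) p) :
    deriv (fun q => ∑ k ∈ Finset.range (K + 1), pr k q * lam k q) p
      = μ * pr 0 p * ∑ k ∈ Finset.range K,
          deriv (lam k) p / lam k p * ∑ i ∈ Finset.Icc (k + 1) K, pr i p := by
  have hμ' : μ ≠ 0 := ne_of_gt hμ
  -- Step A: V(q) = μ (1 - pr 0 q)
  have hV : ∀ q, ∑ k ∈ Finset.range (K + 1), pr k q * lam k q = μ * (1 - pr 0 q) := by
    intro q
    rw [Finset.sum_range_succ, hlamK, mul_zero, add_zero]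
    have h1 : ∀ k ∈ Finset.range K, pr k q * lam k q = μ * pr (k + 1) q := by
      intro k hk
      rw [mul_comm]; exact hdb q k (Finset.mem_range.mp hk)
    rw [Finset.sum_congr rfl h1, ← Finset.mul_sum]
    have h2 := hsum q
    rw [Finset.sum_range_succ'] at h2
    have : ∑ k ∈ Finset.range K, pr (k + 1) q = 1 - pr 0 q := by linarith
    rw [this]
  -- Step B: LHS = μ * (- deriv (pr 0) p)
  have hd0 : deriv (fun q => ∑ k ∈ Finset.range (K + 1), pr k q * lam k q) p
      = μ * (-(deriv (pr 0) p)) := by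
    have hfe : (fun q => ∑ k ∈ Finset.range (K + 1), pr k q * lam k q)
        = fun q => μ * (1 - pr 0 q) := funext hV
    rw [hfe, deriv_const_mul (d := fun q => 1 - pr 0 q) _ ((differentiableAt_const (1:ℝ)).sub (hdiffPr 0 (Nat.zero_le K))),
      deriv_const_sub]
  rw [hd0]
  -- Step C: sum of derivatives of pr vanishes
  have hsumd : ∑ k ∈ Finset.range (K + 1), deriv (pr k) p = 0 := by
    have h1 : deriv (fun q => ∑ k ∈ Finset.range (K + 1), pr k q) p
        = ∑ k ∈ Finset.range (K + 1), deriv (pr k) p := by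
      apply deriv_fun_sum
      intro k hk
      exact hdiffPr k (Nat.lt_succ_iff.mp (Finset.mem_range.mp hk))
    have h2 : (fun q => ∑ k ∈ Finset.range (K + 1), pr k q) = fun _ => (1:ℝ) := funext hsum
    rw [h2, deriv_const] at h1
    exact h1.symm
  -- Step D: derivative of detailed balance
  have hdbd : ∀ k < K, deriv (lam k) p * pr k p + lam k p * deriv (pr k) p
      = μ * deriv (pr (k + 1)) p := by
    intro k hk
    have hk' : k ≤ K := le_of_lt hk
    have hk1 : k + 1 ≤ K := hk
    have h1 : deriv (fun q => lam k q * pr k q) p = deriv (fun q => μ * pr (k + 1) q) p := by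
      congr 1; funext q; exact hdb q k hk
    rw [deriv_fun_mul (hdiffLam k hk') (hdiffPr k hk'),
      deriv_const_mul _ (hdiffPr (k + 1) hk1)] at h1
    exact h1
  -- Step E: log-derivative recursion
  have hratio : ∀ k < K, deriv (pr (k + 1)) p / pr (k + 1) p
      = deriv (lam k) p / lam k p + deriv (pr k) p / pr k p := by
    intro k hk
    have h1 := hdbd k hk
    have h2 := hdb p k hk
    have hlp := hlampos p k hk
    have hp0 := hprpos p k (le_of_lt hk)
    have hp1 := hprpos p (k + 1) hk
    field_simp
    linear_combination deriv (pr (k + 1)) p * h2 - pr (k + 1) p * h1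
  -- Step F: r i = r 0 + ∑_{k < i} c k  for i ≤ K
  have hr : ∀ i ≤ K, deriv (pr i) p / pr i p
      = deriv (pr 0) p / pr 0 p + ∑ k ∈ Finset.range i, deriv (lam k) p / lam k p := by
    intro i
    induction i with
    | zero => simp
    | succ i ih =>
      intro hi
      have hi' : i < K := hi
      rw [hratio i hi', ih (le_of_lt hi'), Finset.sum_range_succ]
      ring
  -- Step G: combine
  have hkey : 0 = deriv (pr 0) p / pr 0 p
      + ∑ i ∈ Finset.range (K + 1), (pr i p * ∑ k ∈ Finset.range i, deriv (lam k) p / lam k p) := by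
    have h1 : ∀ i ∈ Finset.range (K + 1), deriv (pr i) p
        = pr i p * (deriv (pr 0) p / pr 0 p)
          + pr i p * ∑ k ∈ Finset.range i, deriv (lam k) p / lam k p := by
      intro i hi
      have hi' : i ≤ K := Nat.lt_succ_iff.mp (Finset.mem_range.mp hi)
      have hpi := (hprpos p i hi').ne'
      have h2 : deriv (pr i) p = pr i p * (deriv (pr i) p / pr i p) := by field_simp
      rw [h2, hr i hi', mul_add]
    rw [Finset.sum_congr rfl h1, Finset.sum_add_distrib, ← Finset.sum_mul, hsum p,
      one_mul] at hsumd
    linarith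
  -- swap the double sum
  have hswap : ∑ i ∈ Finset.range (K + 1),
      (pr i p * ∑ k ∈ Finset.range i, deriv (lam k) p / lam k p)
      = ∑ k ∈ Finset.range K,
          deriv (lam k) p / lam k p * ∑ i ∈ Finset.Icc (k + 1) K, pr i p := by
    rw [mySwap (K + 1) (fun i => pr i p) (fun k => deriv (lam k) p / lam k p)]
    rw [Finset.sum_range_succ]
    simp only [Finset.Ico_self, Finset.sum_empty, mul_zero, add_zero]
    apply Finset.sum_congr rfl
    intro k _
    rw [Finset.Ico_add_one_right_eq_Icc]
  rw [← hswap]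
  have hp0 := (hprpos p 0 (Nat.zero_le K)).ne'
  field_simp at hkey ⊢
  nlinarith [hkey]
end

section
/- The gap between the model-free and weighted-direct-effect asymptotic variances is an explicit sum of squares: σ_λ̄² − σ_WDE² = μ Σ_{k=1}^K (π_k − π_0 S_k)² / π_k. In particular σ_WDE² ≤ σ_λ̄². -/
/-- The gap between the model-free and weighted-direct-effect asymptotic variances is
an explicit sum of squares: `σ_λ̄² − σ_WDE² = μ Σ_{k=1}^K (π_k − π₀ S_k)² / π_k`.
In particular `σ_WDE² ≤ σ_λ̄²`. -/
theorem variance_gap_sum_of_squares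
    (K : ℕ) (hK : 1 ≤ K) (μ : ℝ) (hμ : 0 < μ)
    (pr : ℕ → ℝ) (hpr : ∀ k ≤ K, 0 < pr k)
    (hsum : ∑ k ∈ Finset.range (K + 1), pr k = 1)
    (S : ℕ → ℝ) (hS : ∀ k, S k = ∑ j ∈ Finset.Icc k K, pr j)
    (σ_bar σWDE : ℝ)
    (hσ_bar : σ_bar = (1 - pr 0) * μ + 2 * μ * pr 0 *
      ((∑ k ∈ Finset.Icc 1 (K - 1), S k * S (k + 1) / pr k)
        - (1 - pr 0) * ∑ k ∈ Finset.Icc 1 K, S k ^ 2 / pr k))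
    (hσWDE : σWDE = μ * pr 0 ^ 2 * ∑ k ∈ Finset.Icc 1 K, S k ^ 2 / pr k) :
    σ_bar - σWDE = μ * ∑ k ∈ Finset.Icc 1 K, (pr k - pr 0 * S k) ^ 2 / pr k
      ∧ σWDE ≤ σ_bar := by
  -- basic facts
  have hSK1 : S (K + 1) = 0 := by
    rw [hS]; simp [Finset.Icc_eq_empty_of_lt (Nat.lt_succ_self K)]
  have hpe : ∀ k ∈ Finset.Icc 1 K, pr k = S k - S (k + 1) := by
    intro k hk
    rw [Finset.mem_Icc] at hk
    rw [hS, hS, ← Finset.insert_Icc_add_one_left_eq_Icc hk.2,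
      Finset.sum_insert (by simp)]
    ring
  have hS1 : S 1 = 1 - pr 0 := by
    rw [hS]
    have : Finset.range (K + 1) = insert 0 (Finset.Icc 1 K) := by
      ext x; simp [Finset.mem_Icc, Nat.lt_succ_iff, Nat.one_le_iff_ne_zero]
      omega
    rw [this, Finset.sum_insert (by simp)] at hsum
    linarith
  -- extend the A sum from Icc 1 (K-1) to Icc 1 K
  have hA : (∑ k ∈ Finset.Icc 1 (K - 1), S k * S (k + 1) / pr k)
      = ∑ k ∈ Finset.Icc 1 K, S k * S (k + 1) / pr k := by
    have hK' : K - 1 + 1 = K := Nat.succ_pred_eq_of_pos hK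
    have : Finset.Icc 1 K = insert K (Finset.Icc 1 (K - 1)) := by
      rw [← hK']
      exact (Finset.insert_Icc_right_eq_Icc_add_one (by omega)).symm
    rw [this, Finset.sum_insert (by simp [Finset.mem_Icc]; omega)]
    rw [hSK1]; ring
  -- B - A = Σ S k
  have hBA : (∑ k ∈ Finset.Icc 1 K, S k ^ 2 / pr k)
      - (∑ k ∈ Finset.Icc 1 K, S k * S (k + 1) / pr k)
      = ∑ k ∈ Finset.Icc 1 K, S k := by
    rw [← Finset.sum_sub_distrib]
    apply Finset.sum_congr rfl
    intro k hk
    have hp := hpr k (Finset.mem_Icc.mp hk).2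
    have hpk := hpe k hk
    rw [div_sub_div_same]
    have h2 : S k ^ 2 - S k * S (k + 1) = S k * pr k := by linear_combination (-S k) * hpk
    rw [h2, mul_div_assoc, div_self hp.ne', mul_one]
  -- expand the square sum
  have hsq : (∑ k ∈ Finset.Icc 1 K, (pr k - pr 0 * S k) ^ 2 / pr k)
      = (∑ k ∈ Finset.Icc 1 K, pr k) - 2 * pr 0 * (∑ k ∈ Finset.Icc 1 K, S k)
        + pr 0 ^ 2 * (∑ k ∈ Finset.Icc 1 K, S k ^ 2 / pr k) := by
    rw [Finset.mul_sum, Finset.mul_sum, ← Finset.sum_sub_distrib,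
      ← Finset.sum_add_distrib]
    apply Finset.sum_congr rfl
    intro k hk
    have hp := hpr k (Finset.mem_Icc.mp hk).2
    field_simp
    ring
  have hsumpr : (∑ k ∈ Finset.Icc 1 K, pr k) = 1 - pr 0 := by
    rw [← hS1, hS]
  -- main equality
  have hmain : σ_bar - σWDE
      = μ * ∑ k ∈ Finset.Icc 1 K, (pr k - pr 0 * S k) ^ 2 / pr k := by
    rw [hσ_bar, hσWDE, hA, hsq, hsumpr]
    linear_combination (-2 * μ * pr 0) * hBA
  refine ⟨hmain, ?_⟩
  have hnn : 0 ≤ ∑ k ∈ Finset.Icc 1 K, (pr k - pr 0 * S k) ^ 2 / pr k := by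
    apply Finset.sum_nonneg
    intro k hk
    have hp := hpr k (Finset.mem_Icc.mp hk).2
    positivity
  nlinarith [hmain, hnn]
end

section
/- The weighted direct effect asymptotic variance is exactly half of the idle-time-based asymptotic variance and at most the model-free asymptotic variance: σ_WDE² = σ_{π_0}²/2 and σ_WDE² ≤ σ_λ̄². -/
/-- The weighted direct effect asymptotic variance is exactly half of the idle-time-based
asymptotic variance and at most the model-free asymptotic variance:
`σ_WDE² = σ_{π₀}²/2` and `σ_WDE² ≤ σ_λ̄²`. -/
theorem variance_comparison
    (K : ℕ) (hK : 1 ≤ K) (μ : ℝ) (hμ : 0 < μ)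
    (pr : ℕ → ℝ) (hpr : ∀ k ≤ K, 0 < pr k)
    (hsum : ∑ k ∈ Finset.range (K + 1), pr k = 1)
    (S : ℕ → ℝ) (hS : ∀ k, S k = ∑ j ∈ Finset.Icc k K, pr j)
    (σ_bar σπ₀ σWDE : ℝ)
    (hσ_bar : σ_bar = (1 - pr 0) * μ + 2 * μ * pr 0 *
      ((∑ k ∈ Finset.Icc 1 (K - 1), S k * S (k + 1) / pr k)
        - (1 - pr 0) * ∑ k ∈ Finset.Icc 1 K, S k ^ 2 / pr k))
    (hσπ₀ : σπ₀ = 2 * μ * pr 0 ^ 2 * ∑ k ∈ Finset.Icc 1 K, S k ^ 2 / pr k)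
    (hσWDE : σWDE = μ * pr 0 ^ 2 * ∑ k ∈ Finset.Icc 1 K, S k ^ 2 / pr k) :
    σWDE = σπ₀ / 2 ∧ σWDE ≤ σ_bar := by
  constructor
  · rw [hσWDE, hσπ₀]; ring
  set c := pr 0 with hc
  -- basic facts
  have hprsum : ∑ k ∈ Finset.Icc 1 K, pr k = 1 - c := by
    have hins : Finset.range (K + 1) = insert 0 (Finset.Icc 1 K) := by
      ext x; simp [Nat.lt_succ_iff]; omega
    rw [hins, Finset.sum_insert (by simp)] at hsum
    linarith
  have hSK1 : S (K + 1) = 0 := by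
    rw [hS]; rw [Finset.Icc_eq_empty (by omega)]; simp
  have hSstep : ∀ k ∈ Finset.Icc 1 K, S (k + 1) = S k - pr k := by
    intro k hk
    simp only [Finset.mem_Icc] at hk
    have hins : Finset.Icc k K = insert k (Finset.Icc (k + 1) K) := by
      ext x; simp [Finset.mem_Icc]; omega
    rw [hS k, hS (k + 1), hins, Finset.sum_insert (by simp)]
    ring
  have hprne : ∀ k ∈ Finset.Icc 1 K, pr k ≠ 0 := by
    intro k hk
    simp only [Finset.mem_Icc] at hk
    exact ne_of_gt (hpr k hk.2)
  set A := ∑ k ∈ Finset.Icc 1 K, S k ^ 2 / pr k with hA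
  set P := ∑ k ∈ Finset.Icc 1 K, S k with hP
  -- B over Icc 1 (K-1) equals B over Icc 1 K
  have hB : ∑ k ∈ Finset.Icc 1 (K - 1), S k * S (k + 1) / pr k
      = ∑ k ∈ Finset.Icc 1 K, S k * S (k + 1) / pr k := by
    have hKe : K - 1 + 1 = K := by omega
    have := Finset.sum_Icc_succ_top (a := 1) (b := K - 1)
      (by omega : 1 ≤ K - 1 + 1) (fun k => S k * S (k + 1) / pr k)
    rw [hKe] at this
    rw [this]
    simp [hSK1]
  have hB2 : ∑ k ∈ Finset.Icc 1 K, S k * S (k + 1) / pr k = A - P := by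
    rw [hA, hP, ← Finset.sum_sub_distrib]
    apply Finset.sum_congr rfl
    intro k hk
    rw [hSstep k hk]
    have h0 := hprne k hk
    field_simp
  -- nonnegative sum
  set G := ∑ k ∈ Finset.Icc 1 K, ((1 - c) * S k - S (k + 1)) ^ 2 / pr k with hG
  have hGnn : 0 ≤ G := by
    apply Finset.sum_nonneg
    intro k hk
    simp only [Finset.mem_Icc] at hk
    exact div_nonneg (sq_nonneg _) (le_of_lt (hpr k hk.2))
  have hGval : G = (1 - c) - 2 * c * P + c ^ 2 * A := by
    have : G = ∑ k ∈ Finset.Icc 1 K, (pr k - 2 * c * S k + c ^ 2 * (S k ^ 2 / pr k)) := by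
      apply Finset.sum_congr rfl
      intro k hk
      rw [hSstep k hk]
      have h0 := hprne k hk
      field_simp
      ring
    rw [this, Finset.sum_add_distrib, Finset.sum_sub_distrib, hprsum,
      ← Finset.mul_sum, ← Finset.mul_sum, ← hP, ← hA]
  have hkey : σ_bar - σWDE = μ * G := by
    rw [hσ_bar, hσWDE, hB, hB2, hGval]
    ring
  nlinarith [mul_nonneg (le_of_lt hμ) hGnn]
end

section
/- The explicitly defined matrix A with entries A_{k,i} = (π_i/μ)(−Σ_{j=1}^{min(i,k)} 1/π_j + Σ_{j=1}^{k} S_j/π_j + Σ_{j=1}^{i} S_j/π_j − Σ_{j=1}^{K} S_j²/π_j) satisfies the two defining conditions of the group inverse of Q: Q · A = I − 1πᵀ and πᵀ · A = 0ᵀ. -/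
open Finset

private lemma filter_ge_range (K j : ℕ) :
    (Finset.range (K+1)).filter (fun k => j ≤ k) = Finset.Icc j K := by
  ext m; simp [Nat.lt_succ_iff, and_comm]

private lemma filter_le_Icc (i k : ℕ) :
    (Finset.Icc 1 i).filter (fun j => j ≤ k) = Finset.Icc 1 (min i k) := by
  ext m; simp; omega

private lemma sum_indicator_le (K j : ℕ) (c : ℕ → ℝ) :
    ∑ k ∈ Finset.range (K+1), (if j ≤ k then c k else 0) = ∑ k ∈ Finset.Icc j K, c k := by
  rw [← filter_ge_range K j, Finset.sum_filter]

private lemma row_sum (K : ℕ) (lam : ℕ → ℝ) (μ : ℝ) (k : ℕ) (hk : k ≤ K) (a : ℕ → ℝ) :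
    ∑ m ∈ Finset.range (K+1),
      (if m = k + 1 then lam k
        else if m + 1 = k then μ
        else if m = k then -(if k < K then lam k else 0) - (if 0 < k then μ else 0)
        else 0) * a m
    = (if k < K then lam k * (a (k+1) - a k) else 0)
      + (if 0 < k then μ * (a (k-1) - a k) else 0) := by
  have hsplit : ∀ m ∈ Finset.range (K+1),
      (if m = k + 1 then lam k
        else if m + 1 = k then μ
        else if m = k then -(if k < K then lam k else 0) - (if 0 < k then μ else 0)
        else 0) * a m
      = (if m = k+1 then lam k * a m else 0)
        + (if 0 < k ∧ m = k-1 then μ * a m else 0)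
        + (if m = k then (-(if k < K then lam k else 0) - (if 0 < k then μ else 0)) * a m else 0) := by
    intro m _
    split_ifs <;> first | ring1 | (exfalso; omega)
  rw [Finset.sum_congr rfl hsplit]
  rw [Finset.sum_add_distrib, Finset.sum_add_distrib]
  rw [Finset.sum_ite_eq' (Finset.range (K+1)) (k+1) (fun m => lam k * a m)]
  rw [Finset.sum_ite_eq' (Finset.range (K+1)) k
      (fun m => (-(if k < K then lam k else 0) - (if 0 < k then μ else 0)) * a m)]
  have h2 : ∑ m ∈ Finset.range (K+1), (if 0 < k ∧ m = k-1 then μ * a m else 0)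
      = if 0 < k then μ * a (k-1) else 0 := by
    by_cases h0 : 0 < k
    · rw [if_pos h0]
      have he : ∀ m ∈ Finset.range (K+1), (if 0 < k ∧ m = k-1 then μ * a m else 0)
          = (if m = k-1 then μ * a m else 0) := fun m _ => by simp [h0]
      rw [Finset.sum_congr rfl he,
        Finset.sum_ite_eq' (Finset.range (K+1)) (k-1) (fun m => μ * a m),
        if_pos (show k-1 ∈ Finset.range (K+1) by simp only [Finset.mem_range]; omega)]
    · simp [h0]
  rw [h2]
  have hkr : k ∈ Finset.range (K+1) := by simp only [Finset.mem_range]; omega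
  rw [if_pos hkr]
  by_cases hkK : k < K <;> by_cases h0 : 0 < k <;>
    simp only [hkK, h0, if_true, if_false] <;>
    first
      | (rw [if_pos (show k+1 ∈ Finset.range (K+1) by simp only [Finset.mem_range]; omega)]; ring1)
      | (rw [if_neg (show k+1 ∉ Finset.range (K+1) by simp only [Finset.mem_range]; omega)]; ring1)
      | ring1

private lemma QA_entry
    (K : ℕ) (hK : 1 ≤ K) (μ : ℝ) (hμ : 0 < μ)
    (lam pr S : ℕ → ℝ)
    (hpr : ∀ k ≤ K, 0 < pr k)
    (hsum : ∑ k ∈ Finset.range (K+1), pr k = 1)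
    (hdb : ∀ k < K, lam k * pr k = μ * pr (k+1))
    (hS : ∀ j, S j = ∑ l ∈ Finset.Icc j K, pr l)
    (k i : ℕ) (hk : k ≤ K) (hi : i ≤ K) :
    ∑ m ∈ Finset.range (K+1),
      (if m = k + 1 then lam k
        else if m + 1 = k then μ
        else if m = k then -(if k < K then lam k else 0) - (if 0 < k then μ else 0)
        else 0) *
      (pr i / μ *
        (-(∑ j ∈ Finset.Icc 1 (min i m), (pr j)⁻¹)
          + ∑ j ∈ Finset.Icc 1 m, S j / pr j
          + ∑ j ∈ Finset.Icc 1 i, S j / pr j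
          - ∑ j ∈ Finset.Icc 1 K, S j ^ 2 / pr j))
    = (if i = k then 1 else 0) - pr i := by
  have hprne : ∀ j, j ≤ K → pr j ≠ 0 := fun j hj => (hpr j hj).ne'
  have hμne : μ ≠ 0 := hμ.ne'
  have hSrec : ∀ m, m ≤ K → S m = pr m + S (m+1) := by
    intro m hm
    rw [hS m, hS (m+1), Finset.Icc_add_one_left_eq_Ioc, Finset.Icc_eq_cons_Ioc hm, Finset.sum_cons]
  have hS0 : S 0 = 1 := by
    rw [hS 0, show Finset.Icc 0 K = Finset.range (K+1) from by
      ext x; simp [Nat.lt_succ_iff]]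
    exact hsum
  have hS1 : S 1 = 1 - pr 0 := by
    have h := hSrec 0 (by omega); rw [hS0] at h; linarith
  have hSK : S K = pr K := by
    rw [hS K, Finset.Icc_self, Finset.sum_singleton]
  have hlam_eq : ∀ m, m < K → lam m = μ * pr (m+1) / pr m := by
    intro m hm
    rw [eq_div_iff (hprne m hm.le)]
    exact hdb m hm
  have main : ∀ a : ℕ → ℝ, (∀ m, a m = pr i / μ *
        (-(∑ j ∈ Finset.Icc 1 (min i m), (pr j)⁻¹)
          + ∑ j ∈ Finset.Icc 1 m, S j / pr j
          + ∑ j ∈ Finset.Icc 1 i, S j / pr j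
          - ∑ j ∈ Finset.Icc 1 K, S j ^ 2 / pr j)) →
      (if k < K then lam k * (a (k+1) - a k) else 0)
        + (if 0 < k then μ * (a (k-1) - a k) else 0)
      = (if i = k then 1 else 0) - pr i := by
    intro a ha
    have hG : ∀ m, (∑ j ∈ Finset.Icc 1 (m+1), S j / pr j)
        = (∑ j ∈ Finset.Icc 1 m, S j / pr j) + S (m+1) / pr (m+1) :=
      fun m => Finset.sum_Icc_succ_top (by omega) _
    have hT : ∀ m, (∑ j ∈ Finset.Icc 1 (min i (m+1)), (pr j)⁻¹)
        = (∑ j ∈ Finset.Icc 1 (min i m), (pr j)⁻¹)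
          + (if m+1 ≤ i then (pr (m+1))⁻¹ else 0) := by
      intro m
      by_cases h : m+1 ≤ i
      · have h1 : min i (m+1) = m+1 := by omega
        have h2 : min i m = m := by omega
        rw [h1, h2, Finset.sum_Icc_succ_top (by omega), if_pos h]
      · have h1 : min i (m+1) = min i m := by omega
        rw [h1, if_neg h, add_zero]
    have hdiff : ∀ m, a (m+1) - a m
        = pr i / μ * (S (m+1) / pr (m+1) - (if m+1 ≤ i then (pr (m+1))⁻¹ else 0)) := by
      intro m
      rw [ha (m+1), ha m, hG m, hT m]; ring
    by_cases hkK : k < K <;> by_cases h0 : 0 < k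
    · -- 0 < k < K
      rw [if_pos hkK, if_pos h0]
      have hk1 : k - 1 + 1 = k := by omega
      have e1 := hdiff k
      have e2 := hdiff (k-1); rw [hk1] at e2
      rw [show a (k-1) - a k = -(a k - a (k-1)) by ring, e1, e2, hSrec k hk,
        hlam_eq k hkK]
      have n1 := hprne k hk
      have n2 := hprne (k+1) (by omega)
      rcases lt_trichotomy i k with h | h | h
      · rw [if_neg (by omega), if_neg (by omega), if_neg (by omega)]
        field_simp
        ring
      · rw [if_neg (by omega), if_pos (show k ≤ i by omega), if_pos h, h]
        field_simp
        ring
      · rw [if_pos (by omega), if_pos (by omega), if_neg (by omega)]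
        field_simp
        ring
    · -- k = 0
      have hk0 : k = 0 := by omega
      subst hk0
      rw [if_pos hkK, if_neg h0, add_zero, hdiff 0, hS1, hlam_eq 0 hkK]
      have n1 := hprne 0 (by omega)
      have n2 := hprne 1 (by omega)
      by_cases h1 : 1 ≤ i
      · rw [if_pos h1, if_neg (by omega)]
        field_simp
        ring
      · have hi0 : i = 0 := by omega
        subst hi0
        rw [if_neg h1, if_pos rfl]
        field_simp
        ring
    · -- k = K
      have hkK' : k = K := by omega
      rw [if_neg hkK, if_pos h0, zero_add]
      have hSk : S k = pr k := by rw [hkK']; exact hSK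
      have hk1 : k - 1 + 1 = k := by omega
      have e2 := hdiff (k-1); rw [hk1] at e2
      rw [show a (k-1) - a k = -(a k - a (k-1)) by ring, e2, hSk]
      have n1 := hprne k hk
      by_cases hik : k ≤ i
      · have hik' : i = k := by omega
        rw [if_pos hik, if_pos hik', hik']
        field_simp
        ring
      · rw [if_neg hik, if_neg (by omega)]
        field_simp
        ring
    · exfalso; omega
  exact (row_sum K lam μ k hk _).trans (main _ (fun m => rfl))

private lemma piA_col
    (K : ℕ) (μ : ℝ) (pr S : ℕ → ℝ)
    (hsum : ∑ k ∈ Finset.range (K+1), pr k = 1)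
    (hS : ∀ j, S j = ∑ l ∈ Finset.Icc j K, pr l)
    (i : ℕ) (hi : i ≤ K) :
    ∑ k ∈ Finset.range (K+1), pr k *
      (pr i / μ *
        (-(∑ j ∈ Finset.Icc 1 (min i k), (pr j)⁻¹)
          + ∑ j ∈ Finset.Icc 1 k, S j / pr j
          + ∑ j ∈ Finset.Icc 1 i, S j / pr j
          - ∑ j ∈ Finset.Icc 1 K, S j ^ 2 / pr j)) = 0 := by
  have hA : ∑ k ∈ Finset.range (K+1), pr k * (∑ j ∈ Finset.Icc 1 (min i k), (pr j)⁻¹)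
      = ∑ j ∈ Finset.Icc 1 i, S j / pr j := by
    have step1 : ∀ k ∈ Finset.range (K+1),
        pr k * (∑ j ∈ Finset.Icc 1 (min i k), (pr j)⁻¹)
        = ∑ j ∈ Finset.Icc 1 i, (if j ≤ k then pr k * (pr j)⁻¹ else 0) := by
      intro k _
      rw [Finset.mul_sum, ← filter_le_Icc i k, Finset.sum_filter]
    rw [Finset.sum_congr rfl step1, Finset.sum_comm]
    refine Finset.sum_congr rfl fun j hj => ?_
    rw [sum_indicator_le K j (fun k => pr k * (pr j)⁻¹), ← Finset.sum_mul, ← hS j,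
      div_eq_mul_inv]
  have hB : ∑ k ∈ Finset.range (K+1), pr k * (∑ j ∈ Finset.Icc 1 k, S j / pr j)
      = ∑ j ∈ Finset.Icc 1 K, S j ^ 2 / pr j := by
    have step1 : ∀ k ∈ Finset.range (K+1),
        pr k * (∑ j ∈ Finset.Icc 1 k, S j / pr j)
        = ∑ j ∈ Finset.Icc 1 K, (if j ≤ k then pr k * (S j / pr j) else 0) := by
      intro k hk
      have hflt : (Finset.Icc 1 K).filter (fun j => j ≤ k) = Finset.Icc 1 k := by
        rw [filter_le_Icc]
        congr 1
        simp only [Finset.mem_range] at hk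
        omega
      rw [Finset.mul_sum, ← hflt, Finset.sum_filter]
    rw [Finset.sum_congr rfl step1, Finset.sum_comm]
    refine Finset.sum_congr rfl fun j hj => ?_
    rw [sum_indicator_le K j (fun k => pr k * (S j / pr j)), ← Finset.sum_mul, ← hS j]
    ring
  have expand : ∀ k ∈ Finset.range (K+1),
      pr k * (pr i / μ *
        (-(∑ j ∈ Finset.Icc 1 (min i k), (pr j)⁻¹)
          + ∑ j ∈ Finset.Icc 1 k, S j / pr j
          + ∑ j ∈ Finset.Icc 1 i, S j / pr j
          - ∑ j ∈ Finset.Icc 1 K, S j ^ 2 / pr j))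
      = pr i / μ *
          (-(pr k * (∑ j ∈ Finset.Icc 1 (min i k), (pr j)⁻¹))
            + pr k * (∑ j ∈ Finset.Icc 1 k, S j / pr j)
            + pr k * ((∑ j ∈ Finset.Icc 1 i, S j / pr j)
                - ∑ j ∈ Finset.Icc 1 K, S j ^ 2 / pr j)) :=
    fun k _ => by ring
  rw [Finset.sum_congr rfl expand, ← Finset.mul_sum, Finset.sum_add_distrib,
    Finset.sum_add_distrib, Finset.sum_neg_distrib, hA, hB, ← Finset.sum_mul, hsum,
    one_mul]
  ring


/-- The generator of the birth–death queue-length chain: superdiagonal entries `λ_k`,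
subdiagonal entries `μ`, diagonal entries chosen so that every row sums to zero. -/
def birthDeathGenerator (K : ℕ) (μ : ℝ) (lam : ℕ → ℝ) :
    Matrix (Fin (K + 1)) (Fin (K + 1)) ℝ :=
  Matrix.of fun k i =>
    if (i : ℕ) = (k : ℕ) + 1 then lam k
    else if (i : ℕ) + 1 = (k : ℕ) then μ
    else if i = k then -(if (k : ℕ) < K then lam k else 0) - (if 0 < (k : ℕ) then μ else 0)
    else 0

/-- The explicitly defined matrix `A` with entries
`A_{k,i} = (π_i/μ)(−Σ_{j=1}^{min(i,k)} 1/π_j + Σ_{j=1}^{k} S_j/π_j + Σ_{j=1}^{i} S_j/π_j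
            − Σ_{j=1}^{K} S_j²/π_j)`
satisfies the two defining conditions of the group inverse of `Q`:
`Q · A = I − 1πᵀ` and `πᵀ · A = 0ᵀ`. -/
theorem group_inverse_explicit_formula
    (K : ℕ) (hK : 1 ≤ K) (μ : ℝ) (hμ : 0 < μ)
    (lam pr : ℕ → ℝ)
    (hlam : ∀ k < K, 0 < lam k)
    (hpr : ∀ k ≤ K, 0 < pr k)
    (hsum : ∑ k ∈ Finset.range (K + 1), pr k = 1)
    (hdb : ∀ k < K, lam k * pr k = μ * pr (k + 1))
    (S : ℕ → ℝ) (hS : ∀ j, S j = ∑ l ∈ Finset.Icc j K, pr l)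
    (A : Matrix (Fin (K + 1)) (Fin (K + 1)) ℝ)
    (hA : A = Matrix.of fun k i : Fin (K + 1) =>
      pr i / μ *
        (-(∑ j ∈ Finset.Icc 1 (min (i : ℕ) (k : ℕ)), (pr j)⁻¹)
          + ∑ j ∈ Finset.Icc 1 (k : ℕ), S j / pr j
          + ∑ j ∈ Finset.Icc 1 (i : ℕ), S j / pr j
          - ∑ j ∈ Finset.Icc 1 K, S j ^ 2 / pr j)) :
    birthDeathGenerator K μ lam * A
        = 1 - Matrix.of (fun _ i : Fin (K + 1) => pr i)
      ∧ Matrix.vecMul (fun i : Fin (K + 1) => pr i) A = 0 := by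
  subst hA
  constructor
  · ext k i
    have key := QA_entry K hK μ hμ lam pr S hpr hsum hdb hS (k : ℕ) (i : ℕ) k.is_le i.is_le
    rw [← Fin.sum_univ_eq_sum_range] at key
    rw [Matrix.mul_apply]
    simp only [birthDeathGenerator, Matrix.of_apply, Matrix.sub_apply, Matrix.one_apply,
      Fin.ext_iff]
    rw [key]
    by_cases h : (i : ℕ) = (k : ℕ)
    · rw [if_pos h, if_pos h.symm]
    · rw [if_neg h, if_neg (fun hh => h hh.symm)]
  · funext i
    have key := piA_col K μ pr S hsum hS (i : ℕ) i.is_le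
    rw [← Fin.sum_univ_eq_sum_range] at key
    simp only [Matrix.vecMul, dotProduct, Matrix.of_apply, Pi.zero_apply]
    exact key
end

section
/- The steady-state probabilities under symmetrically averaged perturbed arrival rates deviate from the unperturbed ones only quadratically in the perturbation: there exists a constant C, depending only on K, B₀, B₁, B₂, and μ, such that for every price p ∈ ℝ, every perturbation ζ ∈ ℝ, and every 0 ≤ k ≤ K, |π_k(p, ζ) − π_k(p, 0)| ≤ C ζ². -/
/-- Symmetrically averaged perturbed arrival rates:
`λ̃_k(p, ζ) = (λ_k(p−ζ) + λ_k(p+ζ))/2`. -/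
noncomputable def lamTilde (lam : ℕ → ℝ → ℝ) (k : ℕ) (p ζ : ℝ) : ℝ :=
  (lam k (p - ζ) + lam k (p + ζ)) / 2

/-- Steady-state probabilities of the birth–death queue run with the averaged arrival
rates `λ̃_k(p, ζ)`:
`π_k(p, ζ) = π₀(p, ζ) · Π_{i=1}^k λ̃_{i−1}(p, ζ)/μ` with
`π₀(p, ζ) = (1 + Σ_{k=1}^K Π_{i=1}^k λ̃_{i−1}(p, ζ)/μ)⁻¹`. -/
noncomputable def steadyStatePerturbed (K : ℕ) (μ : ℝ) (lam : ℕ → ℝ → ℝ)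
    (k : ℕ) (p ζ : ℝ) : ℝ :=
  (1 + ∑ j ∈ Finset.Icc 1 K, ∏ i ∈ Finset.range j, (lamTilde lam i p ζ / μ))⁻¹ *
    ∏ i ∈ Finset.range k, (lamTilde lam i p ζ / μ)

lemma lamTilde_zero (lam : ℕ → ℝ → ℝ) (i : ℕ) (p : ℝ) : lamTilde lam i p 0 = lam i p := by
  simp [lamTilde]

/-- Second-order (Taylor) bound for the symmetric average. -/
lemma taylor_sym_bound (f : ℝ → ℝ) (B₂ : ℝ)
    (hf : Differentiable ℝ f) (hf' : Differentiable ℝ (deriv f))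
    (hf'' : ∀ q : ℝ, |deriv (deriv f) q| ≤ B₂) (p ζ : ℝ) :
    |(f (p - ζ) + f (p + ζ)) / 2 - f p| ≤ B₂ * ζ ^ 2 := by
  have hlip : ∀ a b : ℝ, |deriv f a - deriv f b| ≤ B₂ * |a - b| := by
    intro a b
    have := Convex.norm_image_sub_le_of_norm_deriv_le (f := deriv f) (s := Set.univ)
      (fun x _ => (hf' x)) (fun x _ => hf'' x) convex_univ (Set.mem_univ b) (Set.mem_univ a)
    simpa [Real.norm_eq_abs] using this
  set g : ℝ → ℝ := fun t => f (p - t * ζ) + f (p + t * ζ) with hgdef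
  have hg : ∀ t : ℝ, HasDerivAt g
      (deriv f (p - t * ζ) * (-ζ) + deriv f (p + t * ζ) * ζ) t := by
    intro t
    have h1 : HasDerivAt (fun t : ℝ => p - t * ζ) (-ζ) t := by
      simpa using ((hasDerivAt_id t).mul_const ζ).const_sub p
    have h2 : HasDerivAt (fun t : ℝ => p + t * ζ) ζ t := by
      simpa using ((hasDerivAt_id t).mul_const ζ).const_add p
    exact (((hf (p - t * ζ)).hasDerivAt.comp t h1)).add
      (((hf (p + t * ζ)).hasDerivAt.comp t h2))
  have hbound : ∀ t ∈ Set.Icc (0 : ℝ) 1, ‖deriv g t‖ ≤ 2 * B₂ * ζ ^ 2 := by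
    intro t ht
    rw [(hg t).deriv]
    have h1 : deriv f (p - t * ζ) * (-ζ) + deriv f (p + t * ζ) * ζ
        = (deriv f (p + t * ζ) - deriv f (p - t * ζ)) * ζ := by ring
    rw [Real.norm_eq_abs, h1, abs_mul]
    have h2 := hlip (p + t * ζ) (p - t * ζ)
    have h3 : (p + t * ζ) - (p - t * ζ) = 2 * t * ζ := by ring
    rw [h3] at h2
    have h4 : |2 * t * ζ| = 2 * t * |ζ| := by
      rw [abs_mul, abs_mul]
      simp [abs_of_nonneg ht.1]
    rw [h4] at h2
    have hB2 : 0 ≤ B₂ := le_trans (abs_nonneg _) (hf'' 0)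
    calc |deriv f (p + t * ζ) - deriv f (p - t * ζ)| * |ζ|
        ≤ (B₂ * (2 * t * |ζ|)) * |ζ| := by
          apply mul_le_mul_of_nonneg_right h2 (abs_nonneg _)
      _ = 2 * t * (B₂ * |ζ| ^ 2) := by ring
      _ ≤ 2 * 1 * (B₂ * |ζ| ^ 2) := by
          apply mul_le_mul_of_nonneg_right (by linarith [ht.2]) (by positivity)
      _ = 2 * B₂ * ζ ^ 2 := by rw [sq_abs]; ring
  have hmvt := Convex.norm_image_sub_le_of_norm_deriv_le (f := g) (s := Set.Icc 0 1)
    (fun x _ => (hg x).differentiableAt) hbound (convex_Icc 0 1)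
    (Set.mem_Icc.mpr ⟨le_refl 0, zero_le_one⟩) (Set.mem_Icc.mpr ⟨zero_le_one, le_refl 1⟩)
  have hg0 : g 0 = f p + f p := by simp [hgdef]
  have hg1 : g 1 = f (p - ζ) + f (p + ζ) := by simp [hgdef]
  rw [hg0, hg1, Real.norm_eq_abs, Real.norm_eq_abs] at hmvt
  simp at hmvt
  have : (f (p - ζ) + f (p + ζ)) / 2 - f p = (f (p - ζ) + f (p + ζ) - (f p + f p)) / 2 := by
    ring
  rw [this, abs_div]
  rw [show |(2 : ℝ)| = 2 by norm_num]
  linarith [hmvt]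

lemma abs_prod_range_le {n : ℕ} {a : ℕ → ℝ} {M : ℝ} (h : ∀ i < n, |a i| ≤ M) :
    |∏ i ∈ Finset.range n, a i| ≤ M ^ n := by
  rw [Finset.abs_prod]
  calc ∏ i ∈ Finset.range n, |a i| ≤ ∏ _i ∈ Finset.range n, M :=
        Finset.prod_le_prod (fun i _ => abs_nonneg _)
          (fun i hi => h i (Finset.mem_range.mp hi))
    _ = M ^ n := by rw [Finset.prod_const, Finset.card_range]

lemma prod_range_diff_le (M δ : ℝ) (hM : 1 ≤ M) (hδ : 0 ≤ δ) :
    ∀ (n : ℕ) (a b : ℕ → ℝ), (∀ i < n, |a i| ≤ M) → (∀ i < n, |b i| ≤ M) →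
      (∀ i < n, |a i - b i| ≤ δ) →
      |∏ i ∈ Finset.range n, a i - ∏ i ∈ Finset.range n, b i| ≤ n * M ^ n * δ := by
  intro n
  induction n with
  | zero => simp
  | succ n ih =>
    intro a b ha hb hab
    have ha' : ∀ i < n, |a i| ≤ M := fun i hi => ha i (hi.trans (Nat.lt_succ_self n))
    have hb' : ∀ i < n, |b i| ≤ M := fun i hi => hb i (hi.trans (Nat.lt_succ_self n))
    have hab' : ∀ i < n, |a i - b i| ≤ δ := fun i hi => hab i (hi.trans (Nat.lt_succ_self n))
    have h1 := ih a b ha' hb' hab'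
    rw [Finset.prod_range_succ, Finset.prod_range_succ]
    have key : (∏ i ∈ Finset.range n, a i) * a n - (∏ i ∈ Finset.range n, b i) * b n
        = ((∏ i ∈ Finset.range n, a i) - ∏ i ∈ Finset.range n, b i) * a n
          + (∏ i ∈ Finset.range n, b i) * (a n - b n) := by ring
    rw [key]
    have han : |a n| ≤ M := ha n (Nat.lt_succ_self n)
    have habn : |a n - b n| ≤ δ := hab n (Nat.lt_succ_self n)
    have hbn : |∏ i ∈ Finset.range n, b i| ≤ M ^ n := abs_prod_range_le hb'
    have hM0 : (0:ℝ) ≤ M := le_trans zero_le_one hM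
    have hMn : M ^ n ≤ M ^ (n + 1) := pow_le_pow_right₀ hM (Nat.le_succ n)
    calc |((∏ i ∈ Finset.range n, a i) - ∏ i ∈ Finset.range n, b i) * a n
          + (∏ i ∈ Finset.range n, b i) * (a n - b n)|
        ≤ |((∏ i ∈ Finset.range n, a i) - ∏ i ∈ Finset.range n, b i)| * |a n|
          + |∏ i ∈ Finset.range n, b i| * |a n - b n| := by
          rw [← abs_mul, ← abs_mul]; exact abs_add_le _ _
      _ ≤ (n * M ^ n * δ) * M + M ^ n * δ := by
          apply add_le_add
          · exact mul_le_mul h1 han (abs_nonneg _) (by positivity)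
          · exact mul_le_mul hbn habn (abs_nonneg _) (by positivity)
      _ ≤ (n * M ^ (n+1) * δ) + M ^ (n+1) * δ := by
          apply add_le_add
          · have : (n : ℝ) * M ^ n * δ * M = n * (M ^ n * M) * δ := by ring
            rw [this, ← pow_succ]
          · exact mul_le_mul_of_nonneg_right hMn hδ
      _ = (↑(n + 1)) * M ^ (n + 1) * δ := by push_cast; ring

/-- The steady-state probabilities under symmetrically averaged perturbed arrival rates
deviate from the unperturbed ones only quadratically in the perturbation: there is a
constant `C`, depending only on `K`, `B₀`, `B₁`, `B₂` and `μ`, such that for every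
arrival-rate family satisfying the boundedness and smoothness conditions, every price
`p`, every perturbation `ζ`, and every `0 ≤ k ≤ K`, one has
`|π_k(p, ζ) − π_k(p, 0)| ≤ C ζ²`. -/
theorem steady_state_quadratic_in_perturbation
    (K : ℕ) (hK : 1 ≤ K) (μ B₀ B₁ B₂ : ℝ)
    (hμ : 0 < μ) (hB₀ : 0 < B₀) (hB₀₁ : B₀ ≤ B₁) (hB₂ : 0 ≤ B₂) :
    ∃ C : ℝ, ∀ lam : ℕ → ℝ → ℝ,
      (∀ k < K, Differentiable ℝ (lam k)) →
      (∀ k < K, Differentiable ℝ (deriv (lam k))) →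
      (∀ k < K, ∀ p : ℝ, B₀ ≤ lam k p ∧ lam k p ≤ B₁) →
      (∀ k < K, ∀ p : ℝ, |deriv (deriv (lam k)) p| ≤ B₂) →
      ∀ p ζ : ℝ, ∀ k ≤ K,
        |steadyStatePerturbed K μ lam k p ζ - steadyStatePerturbed K μ lam k p 0|
          ≤ C * ζ ^ 2 := by
  set M : ℝ := max (B₁ / μ) 1 with hMdef
  have hM : 1 ≤ M := le_max_right _ _
  have hM0 : (0:ℝ) ≤ M := le_trans zero_le_one hM
  refine ⟨((K : ℝ) * M ^ K + (K : ℝ) ^ 2 * M ^ (2 * K)) * (B₂ / μ), ?_⟩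
  intro lam hdiff hdiff2 hbound hbound2 p ζ k hk
  set δ : ℝ := B₂ * ζ ^ 2 / μ with hδdef
  have hδ0 : 0 ≤ δ := by positivity
  -- Taylor bound on the tilde rates
  have htaylor : ∀ i < K, |lamTilde lam i p ζ - lam i p| ≤ B₂ * ζ ^ 2 := by
    intro i hi
    exact taylor_sym_bound (lam i) B₂ (hdiff i hi) (hdiff2 i hi) (fun q => hbound2 i hi q) p ζ
  set x : ℕ → ℝ := fun i => lamTilde lam i p ζ / μ with hxdef
  set y : ℕ → ℝ := fun i => lamTilde lam i p 0 / μ with hydef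
  have hlamT : ∀ i < K, ∀ ξ : ℝ, B₀ ≤ lamTilde lam i p ξ ∧ lamTilde lam i p ξ ≤ B₁ := by
    intro i hi ξ
    have h1 := hbound i hi (p - ξ)
    have h2 := hbound i hi (p + ξ)
    constructor <;> (unfold lamTilde; cases h1; cases h2; linarith)
  have hxb : ∀ i < K, 0 ≤ x i ∧ |x i| ≤ M := by
    intro i hi
    have h := hlamT i hi ζ
    have h0 : 0 ≤ x i := div_nonneg (le_trans hB₀.le h.1) hμ.le
    refine ⟨h0, ?_⟩
    rw [abs_of_nonneg h0]
    calc x i ≤ B₁ / μ := div_le_div_of_nonneg_right h.2 hμ.le |>.trans_eq rfl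
      _ ≤ M := le_max_left _ _
  have hyb : ∀ i < K, 0 ≤ y i ∧ |y i| ≤ M := by
    intro i hi
    have h := hlamT i hi 0
    have h0 : 0 ≤ y i := div_nonneg (le_trans hB₀.le h.1) hμ.le
    refine ⟨h0, ?_⟩
    rw [abs_of_nonneg h0]
    calc y i ≤ B₁ / μ := div_le_div_of_nonneg_right h.2 hμ.le |>.trans_eq rfl
      _ ≤ M := le_max_left _ _
  have hxy : ∀ i < K, |x i - y i| ≤ δ := by
    intro i hi
    have : x i - y i = (lamTilde lam i p ζ - lam i p) / μ := by
      rw [hxdef, hydef]; simp only []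
      rw [lamTilde_zero]; ring
    rw [this, abs_div, abs_of_pos hμ, hδdef]
    exact div_le_div_of_nonneg_right (htaylor i hi) hμ.le
  -- denominators
  set Dx : ℝ := 1 + ∑ j ∈ Finset.Icc 1 K, ∏ i ∈ Finset.range j, x i with hDx
  set Dy : ℝ := 1 + ∑ j ∈ Finset.Icc 1 K, ∏ i ∈ Finset.range j, y i with hDy
  have hDx1 : 1 ≤ Dx := by
    rw [hDx]
    have : 0 ≤ ∑ j ∈ Finset.Icc 1 K, ∏ i ∈ Finset.range j, x i := by
      apply Finset.sum_nonneg
      intro j hj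
      apply Finset.prod_nonneg
      intro i hi
      exact (hxb i (lt_of_lt_of_le (Finset.mem_range.mp hi) (Finset.mem_Icc.mp hj).2)).1
    linarith
  have hDy1 : 1 ≤ Dy := by
    rw [hDy]
    have : 0 ≤ ∑ j ∈ Finset.Icc 1 K, ∏ i ∈ Finset.range j, y i := by
      apply Finset.sum_nonneg
      intro j hj
      apply Finset.prod_nonneg
      intro i hi
      exact (hyb i (lt_of_lt_of_le (Finset.mem_range.mp hi) (Finset.mem_Icc.mp hj).2)).1
    linarith
  have hDx0 : Dx ≠ 0 := by linarith
  have hDy0 : Dy ≠ 0 := by linarith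
  -- difference of products for j ≤ K
  have hprods : ∀ j ≤ K,
      |∏ i ∈ Finset.range j, x i - ∏ i ∈ Finset.range j, y i| ≤ (K : ℝ) * M ^ K * δ := by
    intro j hj
    have hxj : ∀ i < j, |x i| ≤ M := fun i hi => (hxb i (lt_of_lt_of_le hi hj)).2
    have hyj : ∀ i < j, |y i| ≤ M := fun i hi => (hyb i (lt_of_lt_of_le hi hj)).2
    have hxyj : ∀ i < j, |x i - y i| ≤ δ := fun i hi => hxy i (lt_of_lt_of_le hi hj)
    have h := prod_range_diff_le M δ hM hδ0 j x y hxj hyj hxyj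
    refine le_trans h ?_
    have hjK : (j : ℝ) ≤ K := Nat.cast_le.mpr hj
    have hMj : M ^ j ≤ M ^ K := pow_le_pow_right₀ hM hj
    have h0j : (0:ℝ) ≤ j := Nat.cast_nonneg j
    apply mul_le_mul_of_nonneg_right _ hδ0
    calc (j : ℝ) * M ^ j ≤ (K : ℝ) * M ^ j :=
          mul_le_mul_of_nonneg_right hjK (by positivity)
      _ ≤ (K : ℝ) * M ^ K := mul_le_mul_of_nonneg_left hMj (Nat.cast_nonneg K)
  have hDdiff : |Dx - Dy| ≤ (K : ℝ) ^ 2 * M ^ K * δ := by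
    have : Dx - Dy = ∑ j ∈ Finset.Icc 1 K,
        (∏ i ∈ Finset.range j, x i - ∏ i ∈ Finset.range j, y i) := by
      rw [hDx, hDy, Finset.sum_sub_distrib]; ring
    rw [this]
    calc |∑ j ∈ Finset.Icc 1 K, (∏ i ∈ Finset.range j, x i - ∏ i ∈ Finset.range j, y i)|
        ≤ ∑ j ∈ Finset.Icc 1 K,
            |∏ i ∈ Finset.range j, x i - ∏ i ∈ Finset.range j, y i| :=
          Finset.abs_sum_le_sum_abs _ _
      _ ≤ ∑ _j ∈ Finset.Icc 1 K, (K : ℝ) * M ^ K * δ :=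
          Finset.sum_le_sum (fun j hj => hprods j (Finset.mem_Icc.mp hj).2)
      _ = (K : ℝ) * ((K : ℝ) * M ^ K * δ) := by
          rw [Finset.sum_const, Nat.card_Icc]; simp
      _ = (K : ℝ) ^ 2 * M ^ K * δ := by ring
  -- numerators
  set Px : ℝ := ∏ i ∈ Finset.range k, x i with hPx
  set Py : ℝ := ∏ i ∈ Finset.range k, y i with hPy
  have hPdiff : |Px - Py| ≤ (K : ℝ) * M ^ K * δ := hprods k hk
  have hPyb : |Py| ≤ M ^ K := by
    have h := abs_prod_range_le (n := k) (a := y) (M := M)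
      (fun i hi => (hyb i (lt_of_lt_of_le hi hk)).2)
    exact le_trans h (pow_le_pow_right₀ hM hk)
  -- assemble
  have hgoal : steadyStatePerturbed K μ lam k p ζ - steadyStatePerturbed K μ lam k p 0
      = Dx⁻¹ * (Px - Py) + (Dx⁻¹ - Dy⁻¹) * Py := by
    unfold steadyStatePerturbed
    rw [hDx, hDy, hPx, hPy, hxdef, hydef]
    ring
  rw [hgoal]
  have hDxi : |Dx⁻¹| ≤ 1 := by
    rw [abs_of_nonneg (inv_nonneg.mpr (by linarith))]
    exact inv_le_one_of_one_le₀ hDx1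
  have hinvdiff : |Dx⁻¹ - Dy⁻¹| ≤ |Dx - Dy| := by
    rw [inv_sub_inv hDx0 hDy0, abs_div, abs_mul]
    have h1 : (1:ℝ) ≤ |Dx| * |Dy| := by
      rw [abs_of_pos (by linarith : (0:ℝ) < Dx), abs_of_pos (by linarith : (0:ℝ) < Dy)]
      nlinarith
    have h2 : |Dy - Dx| = |Dx - Dy| := abs_sub_comm _ _
    rw [h2]
    exact div_le_self (abs_nonneg _) h1
  calc |Dx⁻¹ * (Px - Py) + (Dx⁻¹ - Dy⁻¹) * Py|
      ≤ |Dx⁻¹| * |Px - Py| + |Dx⁻¹ - Dy⁻¹| * |Py| := by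
        rw [← abs_mul, ← abs_mul]; exact abs_add_le _ _
    _ ≤ 1 * ((K : ℝ) * M ^ K * δ) + ((K : ℝ) ^ 2 * M ^ K * δ) * M ^ K := by
        apply add_le_add
        · exact mul_le_mul hDxi hPdiff (abs_nonneg _) zero_le_one
        · exact mul_le_mul (le_trans hinvdiff hDdiff) hPyb (abs_nonneg _) (by positivity)
    _ = ((K : ℝ) * M ^ K + (K : ℝ) ^ 2 * M ^ (2 * K)) * δ := by
        rw [two_mul, pow_add]; ring
    _ = ((K : ℝ) * M ^ K + (K : ℝ) ^ 2 * M ^ (2 * K)) * (B₂ / μ) * ζ ^ 2 := by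
        rw [hδdef]; ring
end
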